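/- Let p ≥ 1 affine maps f_i : ℝ^D → ℝ^D of the form f_i(x) = A_i x + b_i where A_i = diag(a_{i,1},…,a_{i,D}) is diagonal with non-negative entries and b_i = (b_{i,1},…,b_{i,D}). Let K_0 be a nonempty compact subset of ℝ^D and consider the renormalized orbit with respect to the max-radius function ρ_∞. Assume that max over i ∈ {1,…,p}, j ∈ {1,…,D}, and x = (x_1,…,x_D) ∈ H_{ρ_∞}(K_0) of |a_{i,j} x_j + b_{i,j}| is strictly greater than max_{i,j} |a_{i,j}|. Then the normalizing sequence (d_n)_{n≥1} is increasing and converges to some d > max_{i,j}|a_{i,j}|, and the sequence (H_{ρ_∞}^n(K_0))_n converges in the Hausdorff metric to the attractor L_d of the IFS {f_1/d, …, f_p/d}. -/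

import Mathlib

open Metric Filter Pointwise Topology

noncomputable section

/-- The max-radius function `ρ_∞(K) = max {|x_j| : x ∈ K, 1 ≤ j ≤ D}`. -/
def radInf {D : ℕ} (K : Set (EuclideanSpace ℝ (Fin (D + 1)))) : ℝ :=
  sSup {r : ℝ | ∃ x ∈ K, ∃ j, |x j| = r}

/-- The Hutchinson operator `H(K) = ⋃ i, f i '' K`. -/
def hutch {D p : ℕ}
    (f : Fin (p + 1) → EuclideanSpace ℝ (Fin (D + 1)) → EuclideanSpace ℝ (Fin (D + 1)))
    (K : Set (EuclideanSpace ℝ (Fin (D + 1)))) : Set (EuclideanSpace ℝ (Fin (D + 1))) :=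
  ⋃ i, f i '' K

/-- The `ρ_∞`-renormalized Hutchinson operator `H_{ρ_∞}(K) = ρ_∞(H(K))⁻¹ • H(K)`. -/
def hutchRadInf {D p : ℕ}
    (f : Fin (p + 1) → EuclideanSpace ℝ (Fin (D + 1)) → EuclideanSpace ℝ (Fin (D + 1)))
    (K : Set (EuclideanSpace ℝ (Fin (D + 1)))) : Set (EuclideanSpace ℝ (Fin (D + 1))) :=
  (radInf (hutch f K))⁻¹ • hutch f K

/-! ### Auxiliary lemmas -/

section Aux

variable {D : ℕ} {K : Set (EuclideanSpace ℝ (Fin (D + 1)))}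

lemma radSet_eq : {r : ℝ | ∃ x ∈ K, ∃ j, |x j| = r}
    = ⋃ j : Fin (D+1), (fun x : EuclideanSpace ℝ (Fin (D+1)) => |x j|) '' K := by
  ext r
  simp only [Set.mem_setOf_eq, Set.mem_iUnion, Set.mem_image]
  tauto

lemma radSet_compact (hK : IsCompact K) :
    IsCompact {r : ℝ | ∃ x ∈ K, ∃ j, |x j| = r} := by
  rw [radSet_eq]
  exact isCompact_iUnion fun j => hK.image ((PiLp.continuous_apply 2 _ j).abs)

lemma mem_le_radInf (hK : IsCompact K) {x} (hx : x ∈ K) (j : Fin (D+1)) :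
    |x j| ≤ radInf K :=
  le_csSup (radSet_compact hK).bddAbove ⟨x, hx, j, rfl⟩

lemma radInf_le (hne : K.Nonempty) {r : ℝ} (h : ∀ x ∈ K, ∀ j, |x j| ≤ r) :
    radInf K ≤ r := by
  apply csSup_le
  · obtain ⟨x, hx⟩ := hne; exact ⟨|x 0|, x, hx, 0, rfl⟩
  · rintro s ⟨x, hx, j, rfl⟩; exact h x hx j

lemma exists_radInf (hK : IsCompact K) (hne : K.Nonempty) :
    ∃ x ∈ K, ∃ j, |x j| = radInf K :=
  (radSet_compact hK).sSup_mem (by obtain ⟨x, hx⟩ := hne; exact ⟨|x 0|, x, hx, 0, rfl⟩)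

lemma radInf_smul (hK : IsCompact K) (hne : K.Nonempty) {c : ℝ} (hc : 0 ≤ c) :
    radInf (c • K) = c * radInf K := by
  apply le_antisymm
  · apply radInf_le (hne.smul_set)
    rintro x ⟨z, hz, rfl⟩ j
    have : |(c • z) j| = c * |z j| := by simp [abs_mul, abs_of_nonneg hc]
    rw [this]
    exact mul_le_mul_of_nonneg_left (mem_le_radInf hK hz j) hc
  · obtain ⟨x, hx, j, hj⟩ := exists_radInf hK hne
    calc c * radInf K = |(c • x) j| := by simp [abs_mul, abs_of_nonneg hc, hj]
    _ ≤ radInf (c • K) := mem_le_radInf (hK.smul c) (Set.smul_mem_smul_set hx) j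

lemma norm_le_of_coords {x : EuclideanSpace ℝ (Fin (D+1))} {r : ℝ} (hr : 0 ≤ r)
    (h : ∀ j, |x j| ≤ r) : ‖x‖ ≤ Real.sqrt (D+1) * r := by
  rw [EuclideanSpace.norm_eq]
  rw [← Real.sqrt_sq hr, ← Real.sqrt_mul (by positivity)]
  apply Real.sqrt_le_sqrt
  calc ∑ j, ‖x j‖^2 ≤ ∑ _j : Fin (D+1), r^2 := by
        apply Finset.sum_le_sum
        intro j _
        have := h j
        rw [Real.norm_eq_abs]
        nlinarith [abs_nonneg (x j)]
  _ = (D+1) * r^2 := by simp [Finset.sum_const]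

lemma tendsto_zero_of_rec (u ε : ℕ → ℝ) (c : ℝ) (hc0 : 0 ≤ c) (hc1 : c < 1)
    (hu : ∀ n, 0 ≤ u n) (hrec : ∀ n, u (n+1) ≤ c * u n + ε n)
    (hε : Filter.Tendsto ε Filter.atTop (nhds 0)) :
    Filter.Tendsto u Filter.atTop (nhds 0) := by
  rw [Metric.tendsto_atTop]
  intro δ hδ
  have hδ2 : 0 < (1 - c) * (δ/3) := mul_pos (by linarith) (by linarith)
  obtain ⟨N, hN⟩ := (Metric.tendsto_atTop.1 hε) ((1-c)*(δ/3)) hδ2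
  have key : ∀ k, u (N + k) ≤ c^k * u N + δ/3 := by
    intro k
    induction k with
    | zero => simp; nlinarith [hu N]
    | succ k ih =>
      have h1 := hrec (N + k)
      have h2 := hN (N + k) (Nat.le_add_right N k)
      rw [Real.dist_eq, sub_zero] at h2
      have h3 : ε (N + k) ≤ (1-c)*(δ/3) := (abs_le.mp h2.le).2
      have : u (N + k + 1) ≤ c * (c^k * u N + δ/3) + (1-c)*(δ/3) := by
        calc u (N+k+1) ≤ c * u (N+k) + ε (N+k) := h1
        _ ≤ c * (c^k * u N + δ/3) + (1-c)*(δ/3) := by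
            have := mul_le_mul_of_nonneg_left ih hc0
            linarith
      calc u (N + (k+1)) = u (N + k + 1) := by ring_nf
      _ ≤ c * (c^k * u N + δ/3) + (1-c)*(δ/3) := this
      _ ≤ c^(k+1) * u N + δ/3 := by ring_nf; nlinarith [hu N]
  have hpow : Filter.Tendsto (fun k => c^k * u N) Filter.atTop (nhds 0) := by
    simpa using (tendsto_pow_atTop_nhds_zero_of_lt_one hc0 hc1).mul_const (u N)
  obtain ⟨M, hM⟩ := (Metric.tendsto_atTop.1 hpow) (δ/3) (by positivity)
  refine ⟨N + M, fun n hn => ?_⟩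
  obtain ⟨k, rfl⟩ := Nat.exists_eq_add_of_le (le_trans (Nat.le_add_right N M) hn)
  have hk : M ≤ k := by omega
  have hM' := hM k hk
  rw [Real.dist_eq, sub_zero] at hM' ⊢
  have h1 : u (N + k) ≤ c^k * u N + δ/3 := key k
  have h2 : c^k * u N < δ/3 := lt_of_abs_lt hM'
  rw [abs_of_nonneg (hu _)]
  linarith

lemma dist_f_le {D p : ℕ}
    (a : Fin (p + 1) → Fin (D + 1) → ℝ) (ha : ∀ i j, 0 ≤ a i j)
    (b : Fin (p + 1) → Fin (D + 1) → ℝ)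
    (f : Fin (p + 1) → EuclideanSpace ℝ (Fin (D + 1)) → EuclideanSpace ℝ (Fin (D + 1)))
    (hf : ∀ i x j, f i x j = a i j * x j + b i j)
    (lam : ℝ) (hlam : ∀ i j, a i j ≤ lam) (hlam0 : 0 ≤ lam)
    (i : Fin (p+1)) (x y : EuclideanSpace ℝ (Fin (D + 1))) :
    dist (f i x) (f i y) ≤ lam * dist x y := by
  rw [EuclideanSpace.dist_eq, EuclideanSpace.dist_eq]
  rw [← Real.sqrt_sq hlam0, ← Real.sqrt_mul (by positivity)]
  apply Real.sqrt_le_sqrt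
  rw [Finset.mul_sum]
  apply Finset.sum_le_sum
  intro j _
  rw [hf, hf]
  have h1 : dist (a i j * x j + b i j) (a i j * y j + b i j) = a i j * dist (x j) (y j) := by
    rw [Real.dist_eq, Real.dist_eq]
    rw [show a i j * x j + b i j - (a i j * y j + b i j) = a i j * (x j - y j) by ring]
    rw [abs_mul, abs_of_nonneg (ha i j)]
  rw [h1]
  have h2 := hlam i j
  have h3 := ha i j
  have h4 : (0:ℝ) ≤ dist (x j) (y j) := dist_nonneg
  have h5 : a i j ^ 2 ≤ lam ^ 2 := by nlinarith
  rw [mul_pow]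
  nlinarith [sq_nonneg (dist (x j) (y j))]

lemma mem_hutch_iff {D p : ℕ}
    {f : Fin (p + 1) → EuclideanSpace ℝ (Fin (D + 1)) → EuclideanSpace ℝ (Fin (D + 1))}
    {S : Set (EuclideanSpace ℝ (Fin (D + 1)))} {x : EuclideanSpace ℝ (Fin (D + 1))} :
    x ∈ hutch f S ↔ ∃ i, ∃ w ∈ S, f i w = x := by
  simp [hutch]

end Aux

/-- Proposition `theo:maxradius`. For affine maps with diagonal nonnegative
linear parts, if `max_{i,j,x ∈ H_{ρ∞}(K₀)} |a_{i,j} x_j + b_{i,j}| > max_{i,j} |a_{i,j}|`, then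
the normalizing sequence `(d_n)_{n≥1}` is increasing and converges to some
`d > max_{i,j} |a_{i,j}|`, and `(H_{ρ∞}^n(K₀))_n` converges to the attractor `L_d`. -/
theorem stmt17 {D p : ℕ}
    (a : Fin (p + 1) → Fin (D + 1) → ℝ) (ha : ∀ i j, 0 ≤ a i j)
    (b : Fin (p + 1) → Fin (D + 1) → ℝ)
    (f : Fin (p + 1) → EuclideanSpace ℝ (Fin (D + 1)) → EuclideanSpace ℝ (Fin (D + 1)))
    (hf : ∀ i x j, f i x j = a i j * x j + b i j)
    (K₀ : Set (EuclideanSpace ℝ (Fin (D + 1)))) (hK₀c : IsCompact K₀) (hK₀ne : K₀.Nonempty)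
    (hpos : ∀ n, 0 < radInf (hutch f ((hutchRadInf f)^[n] K₀)))
    (hbig : ∃ i j, ∃ x ∈ (hutchRadInf f)^[1] K₀,
      (Finset.univ.sup' Finset.univ_nonempty fun q : Fin (p + 1) × Fin (D + 1) =>
        |a q.1 q.2|) < |a i j * x j + b i j|) :
    (∀ n, 1 ≤ n → radInf (hutch f ((hutchRadInf f)^[n] K₀)) ≤
      radInf (hutch f ((hutchRadInf f)^[n + 1] K₀))) ∧
    ∃ d : ℝ,
      Tendsto (fun n => radInf (hutch f ((hutchRadInf f)^[n] K₀))) atTop (𝓝 d) ∧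
      (Finset.univ.sup' Finset.univ_nonempty fun q : Fin (p + 1) × Fin (D + 1) =>
        |a q.1 q.2|) < d ∧
      ∀ L : Set (EuclideanSpace ℝ (Fin (D + 1))), IsCompact L → L.Nonempty →
        d⁻¹ • hutch f L = L →
        Tendsto (fun n => hausdorffDist ((hutchRadInf f)^[n] K₀) L) atTop (𝓝 0) := by
  classical
  set lam : ℝ := Finset.univ.sup' Finset.univ_nonempty
    (fun q : Fin (p + 1) × Fin (D + 1) => |a q.1 q.2|) with hlam_def
  have habs : ∀ i j, |a i j| ≤ lam := fun i j => by
    rw [hlam_def]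
    exact Finset.le_sup' (fun q : Fin (p + 1) × Fin (D + 1) => |a q.1 q.2|)
      (Finset.mem_univ (i, j))
  have hlam : ∀ i j, a i j ≤ lam := fun i j =>
    le_trans (le_abs_self _) (habs i j)
  have hlam0 : (0:ℝ) ≤ lam := le_trans (abs_nonneg (a 0 0)) (habs 0 0)
  have hfc : ∀ i, Continuous (f i) := by
    intro i
    have : f i = fun x => WithLp.toLp 2 (fun j => a i j * x j + b i j : Fin (D+1) → ℝ) := by
      funext x; ext j; exact hf i x j
    rw [this]
    exact (PiLp.continuous_toLp 2 _).comp (continuous_pi fun j =>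
      (continuous_const.mul (PiLp.continuous_apply 2 _ j)).add continuous_const)
  -- Compactness of hutch
  have hut : ∀ S : Set (EuclideanSpace ℝ (Fin (D + 1))), IsCompact S → S.Nonempty →
      IsCompact (hutch f S) ∧ (hutch f S).Nonempty := by
    intro S hSc hSne
    constructor
    · exact isCompact_iUnion fun i => hSc.image (hfc i)
    · obtain ⟨x, hx⟩ := hSne
      exact ⟨f 0 x, mem_hutch_iff.2 ⟨0, x, hx, rfl⟩⟩
  -- Iterates are compact and nonempty
  have hK : ∀ n, IsCompact ((hutchRadInf f)^[n] K₀) ∧ ((hutchRadInf f)^[n] K₀).Nonempty := by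
    intro n
    induction n with
    | zero => exact ⟨hK₀c, hK₀ne⟩
    | succ n ih =>
      rw [Function.iterate_succ_apply']
      obtain ⟨h1, h2⟩ := hut _ ih.1 ih.2
      exact ⟨h1.smul _, h2.smul_set⟩
  have hsucc : ∀ n, (hutchRadInf f)^[n+1] K₀
      = (radInf (hutch f ((hutchRadInf f)^[n] K₀)))⁻¹ • hutch f ((hutchRadInf f)^[n] K₀) :=
    fun n => Function.iterate_succ_apply' (hutchRadInf f) n K₀
  -- coordinate bound by d_n
  have hsupb : ∀ n, ∀ x ∈ (hutchRadInf f)^[n] K₀, ∀ i j,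
      |a i j * x j + b i j| ≤ radInf (hutch f ((hutchRadInf f)^[n] K₀)) := by
    intro n x hx i j
    have hm : f i x ∈ hutch f ((hutchRadInf f)^[n] K₀) := mem_hutch_iff.2 ⟨i, x, hx, rfl⟩
    have := mem_le_radInf (hut _ (hK n).1 (hK n).2).1 hm j
    rwa [hf] at this
  -- coordinates of K_{n+1} are in [-1,1]
  have hcoord1 : ∀ n, ∀ x ∈ (hutchRadInf f)^[n+1] K₀, ∀ j, |x j| ≤ 1 := by
    intro n x hx j
    have h1 : radInf ((hutchRadInf f)^[n+1] K₀) = 1 := by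
      rw [hsucc n, radInf_smul (hut _ (hK n).1 (hK n).2).1 (hut _ (hK n).1 (hK n).2).2
        (inv_nonneg.2 (hpos n).le)]
      exact inv_mul_cancel₀ (ne_of_gt (hpos n))
    calc |x j| ≤ radInf ((hutchRadInf f)^[n+1] K₀) := mem_le_radInf (hK (n+1)).1 hx j
    _ = 1 := h1
  -- the sup d_n is attained
  have hwit : ∀ n, ∃ x ∈ (hutchRadInf f)^[n] K₀, ∃ i j,
      |a i j * x j + b i j| = radInf (hutch f ((hutchRadInf f)^[n] K₀)) := by
    intro n
    obtain ⟨y, hy, j, hjy⟩ := exists_radInf (hut _ (hK n).1 (hK n).2).1 (hut _ (hK n).1 (hK n).2).2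
    obtain ⟨i, w, hw, rfl⟩ := mem_hutch_iff.1 hy
    exact ⟨w, hw, i, j, by rw [← hf i w j]; exact hjy⟩
  -- Monotonicity
  have hmono : ∀ m, radInf (hutch f ((hutchRadInf f)^[m+1] K₀)) ≤
      radInf (hutch f ((hutchRadInf f)^[m+2] K₀)) := by
    intro m
    set n := m + 1 with hn
    set dn := radInf (hutch f ((hutchRadInf f)^[n] K₀)) with hdn
    obtain ⟨x, hx, i, j, hxe⟩ := hwit n
    have hxj : |x j| ≤ 1 := hcoord1 m x hx j
    set w : EuclideanSpace ℝ (Fin (D+1)) := dn⁻¹ • f i x with hw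
    have hwm : w ∈ (hutchRadInf f)^[n+1] K₀ := by
      rw [hsucc n]
      exact Set.smul_mem_smul_set (mem_hutch_iff.2 ⟨i, x, hx, rfl⟩)
    have hwj : w j = dn⁻¹ * (a i j * x j + b i j) := by
      rw [hw]
      simp [hf]
    have hkey : |a i j * w j + b i j| ≤ radInf (hutch f ((hutchRadInf f)^[n+1] K₀)) :=
      hsupb (n+1) w hwm i j
    have hdnpos : 0 < dn := hpos n
    rcases (abs_eq hdnpos.le).1 hxe with hs | hs
    · -- a i j * x j + b i j = dn, so w j = 1
      have hwj1 : w j = 1 := by rw [hwj, hs, inv_mul_cancel₀ (ne_of_gt hdnpos)]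
      have h1 : dn ≤ a i j * w j + b i j := by
        rw [hwj1, mul_one]
        have := ha i j
        have h2 : x j ≤ 1 := (abs_le.1 hxj).2
        nlinarith
      calc dn ≤ |a i j * w j + b i j| := le_trans h1 (le_abs_self _)
      _ ≤ _ := hkey
    · -- a i j * x j + b i j = -dn, so w j = -1
      have hwj1 : w j = -1 := by
        rw [hwj, hs]
        field_simp
      have h1 : a i j * w j + b i j ≤ -dn := by
        rw [hwj1, mul_neg_one]
        have := ha i j
        have h2 : -1 ≤ x j := (abs_le.1 hxj).1
        nlinarith
      calc dn ≤ -(a i j * w j + b i j) := by linarith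
      _ ≤ |a i j * w j + b i j| := neg_le_abs _
      _ ≤ _ := hkey
  refine ⟨?_, ?_⟩
  · intro n hn
    obtain ⟨m, rfl⟩ := Nat.exists_eq_add_of_le' hn
    exact hmono m
  -- Convergence of d_n
  set bmax : ℝ := Finset.univ.sup' Finset.univ_nonempty
    (fun q : Fin (p + 1) × Fin (D + 1) => |b q.1 q.2|) with hbmax_def
  have hbmax : ∀ i j, |b i j| ≤ bmax := fun i j => by
    rw [hbmax_def]
    exact Finset.le_sup' (fun q : Fin (p + 1) × Fin (D + 1) => |b q.1 q.2|)
      (Finset.mem_univ (i, j))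
  have hbdd : ∀ m, radInf (hutch f ((hutchRadInf f)^[m+1] K₀)) ≤ lam + bmax := by
    intro m
    apply radInf_le (hut _ (hK (m+1)).1 (hK (m+1)).2).2
    rintro y hy j
    obtain ⟨i, x, hx, rfl⟩ := mem_hutch_iff.1 hy
    rw [hf]
    have h1 : |x j| ≤ 1 := hcoord1 m x hx j
    have h2 := hlam i j
    have h3 := hbmax i j
    have h4 := ha i j
    calc |a i j * x j + b i j| ≤ |a i j * x j| + |b i j| := abs_add_le _ _
    _ = a i j * |x j| + |b i j| := by rw [abs_mul, abs_of_nonneg h4]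
    _ ≤ lam + bmax := by nlinarith [abs_nonneg (x j), abs_nonneg (b i j)]
  set u : ℕ → ℝ := fun m => radInf (hutch f ((hutchRadInf f)^[m+1] K₀)) with hu_def
  have humono : Monotone u := monotone_nat_of_le_succ fun m => hmono m
  have hubdd : BddAbove (Set.range u) := by
    refine ⟨lam + bmax, ?_⟩
    rintro _ ⟨m, rfl⟩
    exact hbdd m
  have hulim : Tendsto u atTop (𝓝 (⨆ m, u m)) := tendsto_atTop_ciSup humono hubdd
  set d : ℝ := ⨆ m, u m with hd_def
  have hdd : Tendsto (fun n => radInf (hutch f ((hutchRadInf f)^[n] K₀))) atTop (𝓝 d) := by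
    rw [← tendsto_add_atTop_iff_nat 1]
    exact hulim
  have hd1 : u 0 ≤ d := le_ciSup hubdd 0
  have hlamlt : lam < d := by
    obtain ⟨i, j, x, hx, hlt⟩ := hbig
    have := hsupb 1 x hx i j
    calc lam < |a i j * x j + b i j| := hlt
    _ ≤ u 0 := this
    _ ≤ d := hd1
  have hd0 : 0 < d := lt_of_le_of_lt hlam0 hlamlt
  refine ⟨d, hdd, hlamlt, ?_⟩
  -- Convergence to the attractor
  intro L hLc hLne hLfix
  set c : ℝ := lam * d⁻¹ with hc_def
  have hc0 : 0 ≤ c := mul_nonneg hlam0 (inv_nonneg.2 hd0.le)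
  have hc1 : c < 1 := by
    rw [hc_def, ← div_eq_mul_inv]
    exact (div_lt_one hd0).2 hlamlt
  -- contraction property of K ↦ d⁻¹ • hutch f K
  have hcontr : ∀ A B : Set (EuclideanSpace ℝ (Fin (D + 1))),
      IsCompact A → A.Nonempty → IsCompact B → B.Nonempty →
      hausdorffDist (d⁻¹ • hutch f A) (d⁻¹ • hutch f B) ≤ c * hausdorffDist A B := by
    have hdir : ∀ A B : Set (EuclideanSpace ℝ (Fin (D + 1))),
        IsCompact A → A.Nonempty → IsCompact B → B.Nonempty →
        ∀ x ∈ d⁻¹ • hutch f A, ∃ y ∈ d⁻¹ • hutch f B, dist x y ≤ c * hausdorffDist A B := by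
      intro A B hAc hAne hBc hBne x hx
      obtain ⟨z, hz, rfl⟩ := hx
      obtain ⟨i, w, hw, rfl⟩ := mem_hutch_iff.1 hz
      have hne_top : EMetric.hausdorffEdist A B ≠ ⊤ :=
        hausdorffEdist_ne_top_of_nonempty_of_bounded hAne hBne hAc.isBounded hBc.isBounded
      have h3 : infDist w B ≤ hausdorffDist A B := infDist_le_hausdorffDist_of_mem hw hne_top
      obtain ⟨y0, hy0B, hy0⟩ := hBc.exists_infDist_eq_dist hBne w
      refine ⟨d⁻¹ • f i y0, Set.smul_mem_smul_set (mem_hutch_iff.2 ⟨i, y0, hy0B, rfl⟩), ?_⟩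
      have hdist : dist w y0 ≤ hausdorffDist A B := by rw [← hy0]; exact h3
      calc dist (d⁻¹ • f i w) (d⁻¹ • f i y0) = |d⁻¹| * dist (f i w) (f i y0) := by
            rw [dist_smul₀, Real.norm_eq_abs]
      _ = d⁻¹ * dist (f i w) (f i y0) := by rw [abs_of_nonneg (inv_nonneg.2 hd0.le)]
      _ ≤ d⁻¹ * (lam * dist w y0) := by
            apply mul_le_mul_of_nonneg_left (dist_f_le a ha b f hf lam hlam hlam0 i w y0)
            exact inv_nonneg.2 hd0.le
      _ = c * dist w y0 := by ring
      _ ≤ c * hausdorffDist A B := mul_le_mul_of_nonneg_left hdist hc0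
    intro A B hAc hAne hBc hBne
    apply hausdorffDist_le_of_mem_dist
    · exact mul_nonneg hc0 hausdorffDist_nonneg
    · exact hdir A B hAc hAne hBc hBne
    · intro x hx
      obtain ⟨y, hy, hxy⟩ := hdir B A hBc hBne hAc hAne x hx
      exact ⟨y, hy, le_trans hxy (le_of_eq (by rw [hausdorffDist_comm]))⟩
  -- one-step discrepancy
  set ε : ℕ → ℝ := fun n => |(radInf (hutch f ((hutchRadInf f)^[n] K₀)))⁻¹ - d⁻¹| *
    (Real.sqrt (D+1) * radInf (hutch f ((hutchRadInf f)^[n] K₀))) with hε_def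
  have hε0 : ∀ n, 0 ≤ ε n := fun n =>
    mul_nonneg (abs_nonneg _) (mul_nonneg (Real.sqrt_nonneg _) (hpos n).le)
  have hznorm : ∀ n, ∀ z ∈ hutch f ((hutchRadInf f)^[n] K₀),
      ‖z‖ ≤ Real.sqrt (D+1) * radInf (hutch f ((hutchRadInf f)^[n] K₀)) := by
    intro n z hz
    obtain ⟨i, x, hx, rfl⟩ := mem_hutch_iff.1 hz
    apply norm_le_of_coords (hpos n).le
    intro j
    rw [hf]
    exact hsupb n x hx i j
  have hstep : ∀ n, hausdorffDist ((hutchRadInf f)^[n+1] K₀)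
      (d⁻¹ • hutch f ((hutchRadInf f)^[n] K₀)) ≤ ε n := by
    intro n
    set dn := radInf (hutch f ((hutchRadInf f)^[n] K₀)) with hdn
    have hkey : ∀ z ∈ hutch f ((hutchRadInf f)^[n] K₀), dist (dn⁻¹ • z) (d⁻¹ • z) ≤ ε n := by
      intro z hz
      have : dist (dn⁻¹ • z) (d⁻¹ • z) = |dn⁻¹ - d⁻¹| * ‖z‖ := by
        rw [dist_eq_norm, ← sub_smul, norm_smul, Real.norm_eq_abs]
      rw [this]
      exact mul_le_mul_of_nonneg_left (hznorm n z hz) (abs_nonneg _)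
    apply hausdorffDist_le_of_mem_dist (hε0 n)
    · intro x hx
      rw [hsucc n] at hx
      obtain ⟨z, hz, rfl⟩ := hx
      exact ⟨d⁻¹ • z, Set.smul_mem_smul_set hz, hkey z hz⟩
    · intro x hx
      obtain ⟨z, hz, rfl⟩ := hx
      refine ⟨dn⁻¹ • z, ?_, ?_⟩
      · rw [hsucc n]; exact Set.smul_mem_smul_set hz
      · rw [dist_comm]; exact hkey z hz
  have hεlim : Tendsto ε atTop (𝓝 0) := by
    have h1 : Tendsto (fun n => (radInf (hutch f ((hutchRadInf f)^[n] K₀)))⁻¹)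
        atTop (𝓝 d⁻¹) := hdd.inv₀ (ne_of_gt hd0)
    have h2 : Tendsto (fun n => |(radInf (hutch f ((hutchRadInf f)^[n] K₀)))⁻¹ - d⁻¹|)
        atTop (𝓝 0) := by
      have h2' : Tendsto (fun n => (radInf (hutch f ((hutchRadInf f)^[n] K₀)))⁻¹ - d⁻¹)
          atTop (𝓝 (d⁻¹ - d⁻¹)) := h1.sub tendsto_const_nhds
      rw [sub_self] at h2'
      simpa using h2'.abs
    have h3 : Tendsto (fun n => Real.sqrt (D+1) * radInf (hutch f ((hutchRadInf f)^[n] K₀)))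
        atTop (𝓝 (Real.sqrt (D+1) * d)) := hdd.const_mul _
    have := h2.mul h3
    simpa using this
  -- the recurrence for the Hausdorff distance to L
  have hboundedmid : ∀ n, (d⁻¹ • hutch f ((hutchRadInf f)^[n] K₀)).Nonempty ∧
      Bornology.IsBounded (d⁻¹ • hutch f ((hutchRadInf f)^[n] K₀)) := by
    intro n
    obtain ⟨h1, h2⟩ := hut _ (hK n).1 (hK n).2
    exact ⟨h2.smul_set, (h1.smul _).isBounded⟩
  have hrec : ∀ n, hausdorffDist ((hutchRadInf f)^[n+1] K₀) L ≤
      c * hausdorffDist ((hutchRadInf f)^[n] K₀) L + ε n := by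
    intro n
    have hne_top1 : EMetric.hausdorffEdist ((hutchRadInf f)^[n+1] K₀)
        (d⁻¹ • hutch f ((hutchRadInf f)^[n] K₀)) ≠ ⊤ :=
      hausdorffEdist_ne_top_of_nonempty_of_bounded (hK (n+1)).2 (hboundedmid n).1
        (hK (n+1)).1.isBounded (hboundedmid n).2
    have hne_top2 : EMetric.hausdorffEdist (d⁻¹ • hutch f ((hutchRadInf f)^[n] K₀)) L ≠ ⊤ :=
      hausdorffEdist_ne_top_of_nonempty_of_bounded (hboundedmid n).1 hLne
        (hboundedmid n).2 hLc.isBounded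
    have htri := hausdorffDist_triangle (s := (hutchRadInf f)^[n+1] K₀)
      (t := d⁻¹ • hutch f ((hutchRadInf f)^[n] K₀)) (u := L) hne_top1
    have hcon : hausdorffDist (d⁻¹ • hutch f ((hutchRadInf f)^[n] K₀)) L ≤
        c * hausdorffDist ((hutchRadInf f)^[n] K₀) L := by
      conv_lhs => rw [← hLfix]
      exact hcontr _ L (hK n).1 (hK n).2 hLc hLne
    have h1 := hstep n
    linarith
  exact tendsto_zero_of_rec (fun n => hausdorffDist ((hutchRadInf f)^[n] K₀) L) ε c hc0 hc1
    (fun n => hausdorffDist_nonneg) hrec hεlim
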